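/- Let S ≥ 1 and k ≥ 0 be integers. Then the (k+1)×(k+1) Hankel matrix with (i,j)-entry (i+j)! / (S+i+j+1)!, for 0 ≤ i,j ≤ k, is positive definite. -/

import Mathlib

open MeasureTheory Nat Matrix
open scoped ENNReal

lemma asc_prod (m : ℕ) : ∀ k : ℕ, (m+1).ascFactorial k = ∏ j ∈ Finset.range k, (m + 1 + j)
  | 0 => by simp [Nat.ascFactorial]
  | (k+1) => by
      rw [Nat.ascFactorial, Finset.prod_range_succ, asc_prod m k, mul_comm]

lemma beta_nat (m n : ℕ) :
    ∫ x in (0:ℝ)..1, x ^ m * (1 - x) ^ n = (m ! * n ! : ℝ) / (m + n + 1)! := by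
  have h1 : Complex.betaIntegral (m + 1) (n + 1)
      = ((∫ x in (0:ℝ)..1, x ^ m * (1 - x) ^ n : ℝ) : ℂ) := by
    rw [Complex.betaIntegral, ← intervalIntegral.integral_ofReal]
    refine intervalIntegral.integral_congr fun x hx => ?_
    have e1 : (m:ℂ) + 1 - 1 = (m : ℂ) := by ring
    have e2 : (n:ℂ) + 1 - 1 = (n : ℂ) := by ring
    rw [e1, e2, Complex.cpow_natCast, Complex.cpow_natCast]
    push_cast
    ring
  have h2 := Complex.betaIntegral_eval_nat_add_one_right (u := (m:ℂ)+1) (by simp; positivity) n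
  have hprod : (m ! : ℂ) * ∏ j ∈ Finset.range (n+1), ((m:ℂ) + 1 + j) = ((m+n+1)! : ℂ) := by
    have := Nat.factorial_mul_ascFactorial m (n+1)
    rw [asc_prod] at this
    calc (m ! : ℂ) * ∏ j ∈ Finset.range (n+1), ((m:ℂ) + 1 + j)
        = ((m ! * ∏ j ∈ Finset.range (n+1), (m + 1 + j) : ℕ) : ℂ) := by push_cast; ring
      _ = _ := by rw [this]; norm_cast
  rw [h2] at h1
  have hm : (m ! : ℂ) ≠ 0 := by exact_mod_cast m.factorial_ne_zero
  have hfac : ((m+n+1)! : ℂ) ≠ 0 := by exact_mod_cast (m+n+1).factorial_ne_zero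
  have hp : (∏ j ∈ Finset.range (n+1), ((m:ℂ) + 1 + j)) ≠ 0 := by
    intro h; rw [h, mul_zero] at hprod; exact hfac hprod.symm
  have : ((∫ x in (0:ℝ)..1, x ^ m * (1 - x) ^ n : ℝ) : ℂ) = (m ! * n ! : ℝ) / (m + n + 1)! := by
    rw [← h1]
    push_cast
    field_simp
    rw [← hprod]
    ring
  exact_mod_cast this



/-- for integers `S ≥ 1` and `k ≥ 0`, the Hankel matrix with entries
`(i+j)! / (S+i+j+1)!` is positive definite. -/
theorem hankel_factorial_ratio_shifted_denominator_posDef (S k : ℕ) (hS : 1 ≤ S) :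
    (Matrix.of (fun i j : Fin (k + 1) =>
        (Nat.factorial ((i : ℕ) + (j : ℕ)) : ℝ) /
          (Nat.factorial (S + (i : ℕ) + (j : ℕ) + 1) : ℝ))).PosDef := by
  rw [Matrix.posDef_iff_dotProduct_mulVec]
  constructor
  · show _ = _
    ext i j
    simp only [Matrix.conjTranspose_apply, Matrix.of_apply, star_trivial]
    have e1 : (j:ℕ)+(i:ℕ) = (i:ℕ)+(j:ℕ) := by omega
    have e2 : S+(j:ℕ)+(i:ℕ)+1 = S+(i:ℕ)+(j:ℕ)+1 := by omega
    rw [e1, e2]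
  · intro p hp
    set f : ℝ → ℝ := fun x => ∑ i : Fin (k+1), p i * x ^ (i:ℕ) with hfdef
    set g : ℝ → ℝ := fun x => (f x)^2 * (1-x)^S with hgdef
    have hQF : star p ⬝ᵥ ((Matrix.of (fun i j : Fin (k + 1) =>
        (Nat.factorial ((i : ℕ) + (j : ℕ)) : ℝ) /
          (Nat.factorial (S + (i : ℕ) + (j : ℕ) + 1) : ℝ))) *ᵥ p)
        = ∑ i : Fin (k+1), ∑ j : Fin (k+1),
            p i * (((((i:ℕ)+(j:ℕ))! : ℝ)/(((S+(i:ℕ)+(j:ℕ)+1))! : ℝ)) * p j) := by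
      simp [dotProduct, Matrix.mulVec, Finset.mul_sum]
    have hfc : Continuous f := by fun_prop
    have hint : ∫ x in (0:ℝ)..1, g x
        = ∑ i : Fin (k+1), ∑ j : Fin (k+1),
            p i * p j * (((((i:ℕ)+(j:ℕ))! : ℝ) * (S ! : ℝ)) / ((((i:ℕ)+(j:ℕ))+S+1)! : ℝ)) := by
      have hx : ∀ x : ℝ, g x = ∑ i : Fin (k+1), ∑ j : Fin (k+1),
          p i * p j * (x ^ ((i:ℕ)+(j:ℕ)) * (1-x)^S) := by
        intro x
        rw [hgdef]
        simp only [hfdef]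
        rw [sq, Finset.sum_mul_sum, Finset.sum_mul]
        refine Finset.sum_congr rfl fun i _ => ?_
        rw [Finset.sum_mul]
        refine Finset.sum_congr rfl fun j _ => ?_
        rw [pow_add]; ring
      simp_rw [hx]
      rw [intervalIntegral.integral_finset_sum]
      · refine Finset.sum_congr rfl fun i _ => ?_
        rw [intervalIntegral.integral_finset_sum]
        · refine Finset.sum_congr rfl fun j _ => ?_
          rw [intervalIntegral.integral_const_mul, beta_nat]
        · intro j _
          apply Continuous.intervalIntegrable
          fun_prop
      · intro i _
        apply Continuous.intervalIntegrable
        apply continuous_finset_sum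
        intro j _
        fun_prop
    have key : (S ! : ℝ) * (star p ⬝ᵥ ((Matrix.of (fun i j : Fin (k + 1) =>
        (Nat.factorial ((i : ℕ) + (j : ℕ)) : ℝ) /
          (Nat.factorial (S + (i : ℕ) + (j : ℕ) + 1) : ℝ))) *ᵥ p))
        = ∫ x in (0:ℝ)..1, g x := by
      rw [hQF, hint, Finset.mul_sum]
      refine Finset.sum_congr rfl fun i _ => ?_
      rw [Finset.mul_sum]
      refine Finset.sum_congr rfl fun j _ => ?_
      have e2 : S+(i:ℕ)+(j:ℕ)+1 = (i:ℕ)+(j:ℕ)+S+1 := by omega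
      rw [e2]; ring
    -- nonzero polynomial
    set P : Polynomial ℝ := ∑ i : Fin (k+1), Polynomial.C (p i) * Polynomial.X ^ (i:ℕ) with hPdef
    have hPeval : ∀ x : ℝ, P.eval x = f x := by
      intro x; simp [hPdef, Polynomial.eval_finset_sum, hfdef]
    obtain ⟨i₀, hi₀⟩ := Function.ne_iff.mp hp
    have hcoeff : P.coeff (i₀ : ℕ) = p i₀ := by
      rw [hPdef, Polynomial.finset_sum_coeff]
      rw [Finset.sum_eq_single i₀]
      · simp
      · intro b _ hb
        rw [Polynomial.coeff_C_mul, Polynomial.coeff_X_pow, if_neg, mul_zero]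
        exact fun h => hb (Fin.val_injective h.symm)
      · simp
    have hPne : P ≠ 0 := fun h => hi₀ (by rw [← hcoeff, h, Polynomial.coeff_zero]; rfl)
    have hZ : Set.Finite {x : ℝ | P.IsRoot x} := Polynomial.finite_setOf_isRoot hPne
    -- positivity of the integral
    have hIpos : 0 < ∫ x in (0:ℝ)..1, g x := by
      rw [intervalIntegral.integral_pos_iff_support_of_nonneg_ae']
      · refine ⟨by norm_num, ?_⟩
        have hsub : Set.Ioo (0:ℝ) 1 \ {x : ℝ | P.IsRoot x} ⊆ Function.support g ∩ Set.Ioc 0 1 := by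
          rintro x ⟨hx1, hx2⟩
          refine ⟨?_, hx1.1, hx1.2.le⟩
          have hfx : f x ≠ 0 := by
            rw [← hPeval]; exact hx2
          have h1x : (0:ℝ) < 1 - x := by linarith [hx1.2]
          simp only [Function.mem_support, hgdef]
          positivity
        calc (0:ℝ≥0∞) < 1 := by norm_num
          _ = MeasureTheory.volume (Set.Ioo (0:ℝ) 1 \ {x : ℝ | P.IsRoot x}) := by
              rw [measure_diff_null (hZ.measure_zero _), Real.volume_Ioo]; norm_num
          _ ≤ _ := measure_mono hsub
      · rw [Set.uIoc_of_le (by norm_num : (0:ℝ) ≤ 1)]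
        refine MeasureTheory.ae_restrict_of_forall_mem measurableSet_Ioc fun x hx => ?_
        have h1x : (0:ℝ) ≤ 1 - x := by linarith [hx.2]
        simp only [hgdef]
        positivity
      · apply Continuous.intervalIntegrable
        fun_prop
    have hSfac : (0:ℝ) < (S ! : ℝ) := by exact_mod_cast S.factorial_pos
    set Q := star p ⬝ᵥ ((Matrix.of (fun i j : Fin (k + 1) =>
        (Nat.factorial ((i : ℕ) + (j : ℕ)) : ℝ) /
          (Nat.factorial (S + (i : ℕ) + (j : ℕ) + 1) : ℝ))) *ᵥ p) with hQ
    rw [← key] at hIpos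
    nlinarith [hIpos, hSfac]
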